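/- Let k ≥ 2 be an integer and let T be a balanced tree on 2k or 2k+1 vertices. If n is a positive integer such that 2(k−1) divides ⌊(2n+k)/4⌋, then there exists a T̂-free graph on n vertices with exactly f(n,k) edges; in particular ex(n, T̂) ≥ f(n,k). -/

import Mathlib

/-- `f(n,k) = max{ n₀·n₁ + ⌊(k−1)·n₀/2⌋ : n₀ + n₁ = n }`. -/
def turanF (n k : ℕ) : ℕ :=
  (Finset.range (n + 1)).sup (fun n₀ => n₀ * (n - n₀) + (k - 1) * n₀ / 2)

/-- The suspension `Ĥ` of a graph `H`: a new vertex (`none`) joined to all of `H`. -/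
def suspension {V : Type*} (H : SimpleGraph V) : SimpleGraph (Option V) :=
  SimpleGraph.fromRel (fun x y => x = none ∨ ∃ a b, x = some a ∧ y = some b ∧ H.Adj a b)

/-- The Erdős–Sós conjecture holds for the tree `T'`: every graph on `N` vertices with
more than `(|T'|-2)·N/2` edges contains a copy of `T'`. -/
def ErdosSosProperty {m : ℕ} (T' : SimpleGraph (Fin m)) : Prop :=
  ∀ (N : ℕ) (G : SimpleGraph (Fin N)),
    2 * G.edgeSet.ncard > (m - 2) * N → ∃ f : T' →g G, Function.Injective f

section Aux
open SimpleGraph Finset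

def myG (n m q s : ℕ) : SimpleGraph (Fin n) where
  Adj i j := (((i:ℕ) < m) ↔ ¬((j:ℕ) < m)) ∨
    ((i:ℕ) < m ∧ (j:ℕ) < m ∧ (i:ℕ)/q = (j:ℕ)/q ∧ (((i:ℕ)%q < s) ↔ ¬((j:ℕ)%q < s)))
  symm := by
    constructor
    intro i j h
    rcases h with h | ⟨h1,h2,h3,h4⟩
    · left; tauto
    · exact Or.inr ⟨h2,h1,h3.symm, by tauto⟩
  loopless := by
    constructor
    intro i h
    rcases h with h | ⟨_,_,_,h⟩ <;> tauto

instance (n m q s : ℕ) : DecidableRel (myG n m q s).Adj := fun i j => by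
  change Decidable (_ ∨ _); infer_instance

lemma myG_adj {n m q s : ℕ} {i j : Fin n} : (myG n m q s).Adj i j ↔
    ((((i:ℕ) < m) ↔ ¬((j:ℕ) < m)) ∨
    ((i:ℕ) < m ∧ (j:ℕ) < m ∧ (i:ℕ)/q = (j:ℕ)/q ∧ (((i:ℕ)%q < s) ↔ ¬((j:ℕ)%q < s)))) :=
  Iff.rfl

lemma card_filter_lt (n m : ℕ) (hmn : m ≤ n) :
    (univ.filter (fun j : Fin n => (j:ℕ) < m)).card = m := by
  have h : (univ.filter (fun j : Fin n => (j:ℕ) < m)).card = (range m).card := by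
    refine Finset.card_bij' (fun j _ => (j : ℕ))
      (fun i hi => (⟨i, lt_of_lt_of_le (mem_range.mp hi) hmn⟩ : Fin n)) ?_ ?_ ?_ ?_
    · intro a ha; simpa using (mem_filter.mp ha).2
    · intro a ha; simp [mem_range.mp ha]
    · intro a ha; simp
    · intro a ha; simp
  simpa using h

lemma card_filter_ge (n m : ℕ) (hmn : m ≤ n) :
    (univ.filter (fun j : Fin n => ¬ (j:ℕ) < m)).card = n - m := by
  have h := Finset.card_filter_add_card_filter_not (s := (univ : Finset (Fin n)))
    (p := fun j : Fin n => (j:ℕ) < m)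
  rw [card_filter_lt n m hmn] at h
  simp only [Finset.card_univ, Fintype.card_fin] at h
  omega

lemma card_filter_group (n m q : ℕ) (hq : 0 < q) (hqm : q ∣ m) (hmn : m ≤ n)
    (g : ℕ) (hg : g < m / q) (p : ℕ → Prop) [DecidablePred p] :
    (univ.filter (fun j : Fin n => (j:ℕ) < m ∧ (j:ℕ)/q = g ∧ p ((j:ℕ)%q))).card
      = ((range q).filter p).card := by
  have hgm : q * (g + 1) ≤ m := by
    have h1 := Nat.succ_le_of_lt hg
    calc q * (g+1) = (g+1) * q := Nat.mul_comm _ _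
    _ ≤ (m/q) * q := Nat.mul_le_mul_right _ h1
    _ = m := Nat.div_mul_cancel hqm
  have e1 : q * (g+1) = q * g + q := by ring
  refine Finset.card_bij'
    (fun j _ => (j : ℕ) % q)
    (fun r hr => (⟨q * g + r, by
      have hr' := mem_range.mp (mem_filter.mp hr).1
      omega⟩ : Fin n)) ?_ ?_ ?_ ?_
  · intro a ha
    obtain ⟨-, h1, h2, h3⟩ := mem_filter.mp ha
    exact mem_filter.mpr ⟨mem_range.mpr (Nat.mod_lt _ hq), h3⟩
  · intro r hr
    have hr' := mem_range.mp (mem_filter.mp hr).1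
    have hp := (mem_filter.mp hr).2
    simp only [mem_filter, mem_univ, true_and]
    have hd : (q * g + r) / q = g := by
      rw [Nat.mul_add_div hq, Nat.div_eq_of_lt hr', Nat.add_zero]
    have hm2 : (q * g + r) % q = r := by
      rw [Nat.mul_add_mod, Nat.mod_eq_of_lt hr']
    exact ⟨by omega, hd, by rw [hm2]; exact hp⟩
  · intro a ha
    obtain ⟨-, h1, h2, h3⟩ := mem_filter.mp ha
    apply Fin.ext
    show q * g + (a:ℕ) % q = (a:ℕ)
    conv_rhs => rw [← Nat.div_add_mod (a:ℕ) q]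
    rw [h2]
  · intro r hr
    have hr' := mem_range.mp (mem_filter.mp hr).1
    show (q * g + r) % q = r
    rw [Nat.mul_add_mod, Nat.mod_eq_of_lt hr']

lemma side_count (s : ℕ) (c : Prop) [Decidable c] :
    ((range (2*s)).filter (fun r => (r < s) ↔ ¬ c)).card = s := by
  have h2 : (range (2*s)).filter (fun r => r < s) = range s := by
    ext r; simp; omega
  by_cases hc : c
  · have h1 : (range (2*s)).filter (fun r => (r < s) ↔ ¬ c) = Finset.Ico s (2*s) := by
      ext r; simp [hc]; omega
    rw [h1, Nat.card_Ico]; omega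
  · have h1 : (range (2*s)).filter (fun r => (r < s) ↔ ¬ c) = (range (2*s)).filter (fun r => r < s) := by
      apply Finset.filter_congr; intro r _; simp [hc]
    rw [h1, h2, card_range]

lemma susp_adj_none {V W : Type} (T : SimpleGraph V) (G : SimpleGraph W) (f : suspension T →g G) (a : V) :
    G.Adj (f none) (f (some a)) := by
  apply f.map_adj
  simp [suspension, SimpleGraph.fromRel_adj]

lemma susp_adj_some {V W : Type} (T : SimpleGraph V) (G : SimpleGraph W) (f : suspension T →g G) (a b : V)
    (h : T.Adj a b) : G.Adj (f (some a)) (f (some b)) := by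
  apply f.map_adj
  simp only [suspension, SimpleGraph.fromRel_adj]
  exact ⟨by simp [h.ne], Or.inl (Or.inr ⟨a, b, rfl, rfl, h⟩)⟩

lemma deg_big (n m s : ℕ) (hmn : m ≤ n) (v : Fin n) (hv : ¬ (v:ℕ) < m) :
    (myG n m (2*s) s).degree v = m := by
  rw [← card_neighborFinset_eq_degree, neighborFinset_eq_filter]
  have heq : Finset.univ.filter (fun j => (myG n m (2*s) s).Adj v j)
      = Finset.univ.filter (fun j : Fin n => (j:ℕ) < m) := by
    apply Finset.filter_congr
    intro j _
    show ((((v:ℕ) < m) ↔ ¬((j:ℕ) < m)) ∨ ((v:ℕ) < m ∧ (j:ℕ) < m ∧ (v:ℕ)/(2*s) = (j:ℕ)/(2*s)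
      ∧ (((v:ℕ)%(2*s) < s) ↔ ¬((j:ℕ)%(2*s) < s)))) ↔ _
    constructor
    · rintro (h | ⟨h1,_⟩) <;> tauto
    · intro h; left; tauto
  rw [heq, card_filter_lt n m hmn]

lemma deg_small (n m s : ℕ) (hs : 0 < s) (hqm : 2*s ∣ m) (hmn : m ≤ n)
    (v : Fin n) (hv : (v:ℕ) < m) :
    (myG n m (2*s) s).degree v = (n - m) + s := by
  rw [← card_neighborFinset_eq_degree, neighborFinset_eq_filter]
  have hsplit : Finset.univ.filter (fun j => (myG n m (2*s) s).Adj v j)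
      = Finset.univ.filter (fun j : Fin n => ¬ (j:ℕ) < m)
        ∪ Finset.univ.filter (fun j : Fin n => (j:ℕ) < m ∧ (j:ℕ)/(2*s) = (v:ℕ)/(2*s)
            ∧ (((j:ℕ)%(2*s) < s) ↔ ¬((v:ℕ)%(2*s) < s))) := by
    rw [← Finset.filter_or]
    apply Finset.filter_congr
    intro j _
    show ((((v:ℕ) < m) ↔ ¬((j:ℕ) < m)) ∨ ((v:ℕ) < m ∧ (j:ℕ) < m ∧ (v:ℕ)/(2*s) = (j:ℕ)/(2*s)
      ∧ (((v:ℕ)%(2*s) < s) ↔ ¬((j:ℕ)%(2*s) < s)))) ↔ _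
    constructor
    · rintro (h | ⟨h1,h2,h3,h4⟩)
      · left; tauto
      · right; exact ⟨h2, h3.symm, by tauto⟩
    · rintro (h | ⟨h1,h2,h3⟩)
      · left; tauto
      · exact Or.inr ⟨hv, h1, h2.symm, by tauto⟩
  rw [hsplit, Finset.card_union_of_disjoint]
  · rw [card_filter_ge n m hmn]
    congr 1
    have hg : (v:ℕ)/(2*s) < m/(2*s) := Nat.div_lt_div_of_lt_of_dvd hqm hv
    rw [card_filter_group n m (2*s) (by omega) hqm hmn _ hg
      (fun r => (r < s) ↔ ¬((v:ℕ)%(2*s) < s))]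
    exact side_count s _
  · rw [Finset.disjoint_filter]
    intro j _ hj1 hj2
    exact hj1 hj2.1

lemma myG_edges (n m s : ℕ) (hs : 0 < s) (hqm : 2*s ∣ m) (hmn : m ≤ n) :
    (myG n m (2*s) s).edgeFinset.card = m*(n-m) + s*m/2 := by
  have hsum := SimpleGraph.sum_degrees_eq_twice_card_edges (myG n m (2*s) s)
  rw [← Finset.sum_filter_add_sum_filter_not Finset.univ (fun v : Fin n => (v:ℕ) < m)] at hsum
  have h1 : ∑ v ∈ Finset.univ.filter (fun v : Fin n => (v:ℕ) < m), (myG n m (2*s) s).degree v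
      = m * ((n-m)+s) := by
    rw [Finset.sum_congr rfl (fun v hv => deg_small n m s hs hqm hmn v (Finset.mem_filter.mp hv).2)]
    rw [Finset.sum_const, card_filter_lt n m hmn, smul_eq_mul]
  have h2 : ∑ v ∈ Finset.univ.filter (fun v : Fin n => ¬ (v:ℕ) < m), (myG n m (2*s) s).degree v
      = (n-m) * m := by
    rw [Finset.sum_congr rfl (fun v hv => deg_big n m s hmn v (Finset.mem_filter.mp hv).2)]
    rw [Finset.sum_const, card_filter_ge n m hmn, smul_eq_mul]
  rw [h1, h2] at hsum
  have heven : 2 ∣ s * m := by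
    obtain ⟨t, ht⟩ := hqm
    exact ⟨s*s*t, by subst ht; ring⟩
  have hexp : m * ((n-m)+s) + (n-m)*m = 2*(m*(n-m)) + s*m := by ring
  omega

lemma turanF_eq (n k m : ℕ) (hk : 2 ≤ k) (hmn : m ≤ n)
    (h4 : 4*m ≤ 2*n+k) (h4' : 2*n+k ≤ 4*m+3) (heven : 2 ∣ (k-1)*m) :
    turanF n k = m*(n-m) + (k-1)*m/2 := by
  apply le_antisymm
  · apply Finset.sup_le
    intro j hj
    have hjn : j ≤ n := by simpa [Nat.lt_succ_iff] using hj
    have key : 2*(j*(n-j)) + (k-1)*j ≤ 2*(m*(n-m)) + (k-1)*m := by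
      zify [hjn, hmn]
      rw [Nat.cast_sub (by omega : 1 ≤ k)]
      push_cast
      rcases lt_trichotomy j m with h | h | h
      · nlinarith [mul_nonneg (by omega : (0:ℤ) ≤ (m:ℤ) - j)
          (by omega : (0:ℤ) ≤ 2*(n:ℤ) + k - 1 - 2*(m+j))]
      · subst h; omega
      · nlinarith [mul_nonneg (by omega : (0:ℤ) ≤ (j:ℤ) - m)
          (by omega : (0:ℤ) ≤ 2*((m:ℤ)+j) - (2*n + k - 1))]
    omega
  · exact Finset.le_sup (f := fun n₀ => n₀ * (n - n₀) + (k - 1) * n₀ / 2)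
      (mem_range.mpr (by omega))

lemma myG_free (k : ℕ) (hk : 2 ≤ k) {V : Type} [Fintype V] [DecidableEq V]
    (T : SimpleGraph V) (htree : T.IsTree) (hcardV : 2*k ≤ Fintype.card V)
    (A : Finset V) (hA : A.card = k)
    (hAind : ∀ x ∈ A, ∀ y ∈ A, ¬ T.Adj x y)
    (hAcind : ∀ x ∈ Aᶜ, ∀ y ∈ Aᶜ, ¬ T.Adj x y)
    (n m : ℕ) (hqm : 2*(k-1) ∣ m) (hmn : m ≤ n) :
    ¬ ∃ f : suspension T →g (myG n m (2*(k-1)) (k-1)), Function.Injective f := by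
  classical
  set s := k - 1 with hs
  set q := 2 * s with hq
  rintro ⟨f, hf⟩
  have hqpos : 0 < q := by omega
  have hVpos : Nonempty V := Fintype.card_pos_iff.mp (by omega)
  obtain ⟨a₀⟩ := hVpos
  set v := f none with hvdef
  have hadj0 : ∀ a : V, (myG n m q s).Adj v (f (some a)) :=
    fun a => susp_adj_none T _ f a
  have hconn : ∀ (R : V → Prop), (∀ a b, T.Adj a b → (R a ↔ R b)) → ∀ a b, R a ↔ R b := by
    intro R hR a b
    obtain ⟨w⟩ := htree.isConnected.preconnected a b
    induction w with
    | nil => rfl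
    | cons hadj p ih => exact (hR _ _ hadj).trans ih
  have hinj : Function.Injective (fun a : V => f (some a)) :=
    fun a b hab => Option.some.inj (hf hab)
  by_cases hv : (v:ℕ) < m
  · -- apex on the small (structured) side
    have hstar : ∀ a : V, ((f (some a)):ℕ) < m →
        ((f (some a)):ℕ)/q = (v:ℕ)/q ∧ ((((f (some a)):ℕ)%q < s) ↔ ¬((v:ℕ)%q < s)) := by
      intro a ha
      rcases myG_adj.mp (hadj0 a) with h | ⟨h1, h2, h3, h4⟩
      · tauto
      · exact ⟨h3.symm, by tauto⟩
    have hflip1 : ∀ a b, T.Adj a b →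
        ((((f (some a)):ℕ) < m) ↔ ¬(((f (some b)):ℕ) < m)) := by
      intro a b hab
      rcases myG_adj.mp (susp_adj_some T _ f a b hab) with h | ⟨h1, h2, h3, h4⟩
      · exact h
      · exfalso
        obtain ⟨-, hsa⟩ := hstar a h1
        obtain ⟨-, hsb⟩ := hstar b h2
        tauto
    have hflip2 : ∀ a b, T.Adj a b → ((a ∈ A) ↔ ¬(b ∈ A)) := by
      intro a b hab
      constructor
      · intro ha hb; exact hAind a ha b hb hab
      · intro hb
        by_contra ha
        exact hAcind a (Finset.mem_compl.mpr ha) b (Finset.mem_compl.mpr (by tauto)) hab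
    have hcst := hconn (fun a => ((((f (some a)):ℕ) < m) ↔ a ∈ A))
      (by intro a b hab; have h1 := hflip1 a b hab; have h2 := hflip2 a b hab; tauto)
    -- the target finset
    set Tgt := univ.filter (fun j : Fin n => (j:ℕ) < m ∧ (j:ℕ)/q = (v:ℕ)/q
      ∧ (((j:ℕ)%q < s) ↔ ¬((v:ℕ)%q < s))) with hTgt
    have hTgtcard : Tgt.card = s := by
      rw [hTgt, card_filter_group n m q hqpos hqm hmn _
        (Nat.div_lt_div_of_lt_of_dvd hqm hv) (fun r => (r < s) ↔ ¬((v:ℕ)%q < s)),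
        hq, side_count]
    have hkey : ∀ (Y : Finset V), (∀ a ∈ Y, ((f (some a)):ℕ) < m) → Y.card ≤ s := by
      intro Y hY
      rw [← hTgtcard]
      apply Finset.card_le_card_of_injOn (fun a => f (some a))
      · intro a ha
        rw [hTgt, mem_coe, mem_filter]
        obtain ⟨hg, hside⟩ := hstar a (hY a ha)
        exact ⟨mem_univ _, hY a ha, hg, hside⟩
      · exact hinj.injOn
    by_cases hR0 : (((f (some a₀)):ℕ) < m) ↔ a₀ ∈ A
    · have hall : ∀ a, (((f (some a)):ℕ) < m) ↔ a ∈ A :=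
        fun a => (hcst a a₀).mpr hR0
      have := hkey A (fun a ha => (hall a).mpr ha)
      omega
    · have hall : ∀ a, (((f (some a)):ℕ) < m) ↔ a ∈ Aᶜ := by
        intro a
        have := (hcst a a₀)
        rw [Finset.mem_compl]
        tauto
      have hYc := hkey Aᶜ (fun a ha => (hall a).mpr ha)
      rw [Finset.card_compl, hA] at hYc
      omega
  · -- apex on the big side: all images in one group
    have hall : ∀ a : V, ((f (some a)):ℕ) < m := by
      intro a
      rcases myG_adj.mp (hadj0 a) with h | ⟨h1, h2, h3, h4⟩
      · tauto
      · tauto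
    have hgrp : ∀ a b, T.Adj a b → ((f (some a)):ℕ)/q = ((f (some b)):ℕ)/q := by
      intro a b hab
      rcases myG_adj.mp (susp_adj_some T _ f a b hab) with h | ⟨h1, h2, h3, h4⟩
      · exact absurd (hall b) (h.mp (hall a))
      · exact h3
    set c := ((f (some a₀)):ℕ)/q with hc
    have hcst := hconn (fun a => ((f (some a)):ℕ)/q = c)
      (by intro a b hab; rw [hgrp a b hab])
    have hallc : ∀ a, ((f (some a)):ℕ)/q = c := fun a => (hcst a a₀).mpr rfl
    have hbound : Fintype.card V ≤ q := by
      have h1 : (univ : Finset V).card ≤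
          (univ.filter (fun j : Fin n => (j:ℕ) < m ∧ (j:ℕ)/q = c ∧ (fun _ : ℕ => True) ((j:ℕ)%q))).card := by
        apply Finset.card_le_card_of_injOn (fun a => f (some a))
        · intro a _
          rw [mem_coe, mem_filter]
          exact ⟨mem_univ _, hall a, hallc a, trivial⟩
        · exact hinj.injOn
      rw [card_filter_group n m q hqpos hqm hmn c
        (Nat.div_lt_div_of_lt_of_dvd hqm (hall a₀)) (fun _ => True)] at h1
      simpa using h1
    omega

end Aux

theorem stmt3 (k : ℕ) (hk : 2 ≤ k)
    {V : Type} [Fintype V] [DecidableEq V] (T : SimpleGraph V)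
    (htree : T.IsTree)
    (hcard : Fintype.card V = 2 * k ∨ Fintype.card V = 2 * k + 1)
    (A : Finset V) (hA : A.card = k)
    (hAind : ∀ x ∈ A, ∀ y ∈ A, ¬ T.Adj x y)
    (hAcind : ∀ x ∈ Aᶜ, ∀ y ∈ Aᶜ, ¬ T.Adj x y)
    (n : ℕ) (hn : 0 < n)
    (hdvd : 2 * (k - 1) ∣ (2 * n + k) / 4) :
    ∃ G : SimpleGraph (Fin n),
      (¬ ∃ f : suspension T →g G, Function.Injective f) ∧
        G.edgeSet.ncard = turanF n k := by
  classical
  set m := (2 * n + k) / 4 with hm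
  have hqm : 2 * (k - 1) ∣ m := hdvd
  have hm0 : 0 < m := by omega
  have hqle : 2 * (k - 1) ≤ m := Nat.le_of_dvd hm0 hqm
  have hmn : m ≤ n := by omega
  refine ⟨myG n m (2 * (k - 1)) (k - 1), ?_, ?_⟩
  · exact myG_free k hk T htree (by omega) A hA hAind hAcind n m hqm hmn
  · have h1 : (myG n m (2 * (k - 1)) (k - 1)).edgeSet.ncard
        = (myG n m (2 * (k - 1)) (k - 1)).edgeFinset.card := by
      rw [← SimpleGraph.coe_edgeFinset, Set.ncard_coe_finset]
    have heven : 2 ∣ (k - 1) * m := by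
      obtain ⟨t, ht⟩ := hqm
      exact ⟨(k - 1) * (k - 1) * t, by rw [ht]; ring⟩
    rw [h1, myG_edges n m (k - 1) (by omega) hqm hmn,
      turanF_eq n k m hk hmn (by omega) (by omega) heven]
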